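/- Every infix of length at least 3 of any finite word built by concatenating copies of x₁ and x₂ has a strictly positive energy level in at least one of the two components, where x₁ = (+,0)(+,−) and x₂ = (0,+)(−,+). -/

import Mathlib

/-- The alphabet `I = {0, +, -}`. -/
inductive I : Type
  | zero | plus | minus
deriving DecidableEq, Inhabited

/-- Value of a single letter. -/
def lv : I → ℤ
  | I.zero => 0
  | I.plus => 1
  | I.minus => -1

/-- Energy level of a finite word. -/
def EL (v : List I) : ℤ := (v.map lv).sum

/-- The prefix `w(0) ⋯ w(n-1)` of an infinite word, of length `n`. -/
def prefixWord (w : ℕ → I) (n : ℕ) : List I := (List.range n).map w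

/-- `w` is safe if every nonempty prefix has nonnegative energy level. -/
def Safe (w : ℕ → I) : Prop := ∀ n : ℕ, 0 ≤ EL (prefixWord w (n + 1))

/-- `w` has a safe suffix. -/
def HasSafeSuffix (w : ℕ → I) : Prop := ∃ n : ℕ, Safe (fun k => w (n + k))

/-- The word `x₁ = (+,0)(+,-)`. -/
def x1 : List (I × I) := [(I.plus, I.zero), (I.plus, I.minus)]

/-- The word `x₂ = (0,+)(-,+)`. -/
def x2 : List (I × I) := [(I.zero, I.plus), (I.minus, I.plus)]


/-- Sum of the two component values of a pair letter. -/
def f (p : I × I) : ℤ := lv p.1 + lv p.2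

def A (k : ℕ) : List ℤ := (List.replicate k [(1:ℤ), 0]).flatten

lemma mem_A_nonneg : ∀ k (x : ℤ), x ∈ A k → 0 ≤ x := by
  intro k
  induction k with
  | zero => simp [A]
  | succ n ih =>
    intro x hx
    rw [show A (n+1) = 1 :: 0 :: A n from by simp [A, List.replicate_succ]] at hx
    rcases List.mem_cons.mp hx with h | h
    · simp [h]
    rcases List.mem_cons.mp h with h | h
    · simp [h]
    exact ih x h

lemma sum_nonneg_of_mem_A (k : ℕ) (t : List ℤ) (h : ∀ x ∈ t, x ∈ A k) :
    0 ≤ t.sum :=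
  List.sum_nonneg fun x hx => mem_A_nonneg k x (h x hx)

lemma infix_sum_ge_one : ∀ (k : ℕ) (s u t : List ℤ),
    s ++ u ++ t = A k → 2 ≤ u.length → 1 ≤ u.sum := by
  intro k
  induction k with
  | zero =>
    intro s u t h hu
    simp [A] at h
    simp [h.2.1] at hu
  | succ n ih =>
    intro s u t h hu
    have hA : A (n + 1) = 1 :: 0 :: A n := by
      simp [A, List.replicate_succ]
    rw [hA] at h
    match s with
    | [] =>
      -- u starts the word, so u = 1 :: ...
      match u with
      | [] => simp at hu
      | a :: u' =>
        simp only [List.nil_append, List.cons_append, List.cons.injEq] at h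
        have ha : a = 1 := h.1
        have hrest : u' ++ t = 0 :: A n := h.2
        have hsum : 0 ≤ u'.sum := by
          apply List.sum_nonneg
          intro x hx
          have : x ∈ (0 : ℤ) :: A n := by
            rw [← hrest]; exact List.mem_append_left _ hx
          rcases List.mem_cons.mp this with h0 | h0
          · simp [h0]
          · exact mem_A_nonneg n x h0
        simp [ha, List.sum_cons]
        linarith
    | b :: s' =>
      simp only [List.cons_append, List.cons.injEq] at h
      have hrest : s' ++ u ++ t = 0 :: A n := h.2
      match s' with
      | [] =>
        -- u = 0 :: rest where rest ++ t = A n, rest nonempty so rest head = 1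
        match u with
        | [] => simp at hu
        | a :: u' =>
          simp only [List.nil_append, List.cons_append, List.cons.injEq] at hrest
          have ha : a = 0 := hrest.1
          have h2 : u' ++ t = A n := hrest.2
          match u', n with
          | [], _ => simp at hu
          | c :: u'', 0 => simp [A] at h2
          | c :: u'', m + 1 =>
            have hA' : A (m + 1) = 1 :: 0 :: A m := by
              simp [A, List.replicate_succ]
            rw [hA'] at h2
            simp only [List.cons_append, List.cons.injEq] at h2
            have hc : c = 1 := h2.1
            have hsum : 0 ≤ u''.sum := by
              apply List.sum_nonneg
              intro x hx
              have : x ∈ (0 : ℤ) :: A m := by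
                rw [← h2.2]; exact List.mem_append_left _ hx
              rcases List.mem_cons.mp this with h0 | h0
              · simp [h0]
              · exact mem_A_nonneg m x h0
            simp [ha, hc, List.sum_cons]
            linarith
      | c :: s'' =>
        simp only [List.cons_append, List.cons.injEq] at hrest
        exact ih s'' u t hrest.2 hu

lemma EL_fst_add_snd (u : List (I × I)) :
    EL (u.map Prod.fst) + EL (u.map Prod.snd) = (u.map f).sum := by
  induction u with
  | nil => simp [EL]
  | cons a u ih =>
    simp only [List.map_cons, EL, List.sum_cons] at *
    rw [show f a = lv a.1 + lv a.2 from rfl]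
    linarith

lemma map_blocks : ∀ (l : List (List (I × I))), (∀ v ∈ l, v = x1 ∨ v = x2) →
    l.map (List.map f) = List.replicate l.length [(1:ℤ), 0] := by
  intro l hl
  induction l with
  | nil => simp
  | cons v l ih =>
    simp only [List.map_cons, List.length_cons, List.replicate_succ]
    have h1 : List.map f v = [(1:ℤ), 0] := by
      rcases hl v List.mem_cons_self with h | h <;>
        simp [h, x1, x2, f, lv]
    rw [h1, ih fun w hw => hl w (List.mem_cons_of_mem v hw)]

theorem infix_of_x_words_positive_energy (l : List (List (I × I)))
    (hl : ∀ v ∈ l, v = x1 ∨ v = x2) (u : List (I × I))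
    (hinf : u <:+: l.flatten) (hlen : 3 ≤ u.length) :
    0 < EL (u.map Prod.fst) ∨ 0 < EL (u.map Prod.snd) := by
  obtain ⟨s, t, hst⟩ := hinf
  have hmap : l.flatten.map f = A l.length := by
    rw [List.map_flatten, map_blocks l hl]; rfl
  have heq : s.map f ++ u.map f ++ t.map f = A l.length := by
    rw [← List.map_append, ← List.map_append, hst, hmap]
  have hlen2 : 2 ≤ (u.map f).length := by
    rw [List.length_map]; omega
  have hsum := infix_sum_ge_one l.length (s.map f) (u.map f) (t.map f) heq hlen2
  have hadd := EL_fst_add_snd u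
  by_contra hcon
  push_neg at hcon
  linarith [hcon.1, hcon.2]
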